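/- Let X be a real Banach space with the λ-bounded approximation property and let Y be a real Banach space complemented in its bidual via a bounded projection p. Suppose C ≥ 0 is such that every bounded quasilinear map G : X → Y with constant 1 admits a (not necessarily continuous) linear map L : X → Y with ‖G(x) − L(x)‖ ≤ C‖x‖ for all x. Then every quasilinear map F : X → Y with constant 1 admits a (not necessarily continuous) linear map L : X → Y with ‖F(x) − L(x)‖ ≤ ‖p‖·C·λ·‖x‖ for all x ∈ X; in particular every quasilinear map from X to Y is trivial and K(X,Y) is finite. -/

import Mathlib

open Finset

/-- `F : X → Y` is quasilinear with constant `Q`. -/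
def IsQuasilinearWith {X Y : Type*} [NormedAddCommGroup X] [NormedSpace ℝ X]
    [NormedAddCommGroup Y] [NormedSpace ℝ Y] (Q : ℝ) (F : X → Y) : Prop :=
  (∀ (c : ℝ) (x : X), F (c • x) = c • F x) ∧
    ∀ x y : X, ‖F (x + y) - F x - F y‖ ≤ Q * (‖x‖ + ‖y‖)

/-- `X` has the `λ`-bounded approximation property: every finite-dimensional subspace
is fixed by a finite-rank operator of norm at most `λ`. -/
def HasBAPWith (lam : ℝ) (X : Type*) [NormedAddCommGroup X] [NormedSpace ℝ X] : Prop :=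
  ∀ E : Submodule ℝ X, FiniteDimensional ℝ E →
    ∃ u : X →L[ℝ] X, FiniteDimensional ℝ (LinearMap.range (u : X →ₗ[ℝ] X)) ∧
      ‖u‖ ≤ lam ∧ ∀ x ∈ E, u x = x

section Aux

variable {X Y : Type*} [NormedAddCommGroup X] [NormedSpace ℝ X]
  [NormedAddCommGroup Y] [NormedSpace ℝ Y]

lemma IsQuasilinearWith.map_zero {Q : ℝ} {F : X → Y} (hF : IsQuasilinearWith Q F) :
    F 0 = 0 := by
  have := hF.1 0 0
  simpa using this

lemma quasi_sum {Q : ℝ} {F : X → Y} (hQ : 0 ≤ Q) (hF : IsQuasilinearWith Q F) :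
    ∀ (n : ℕ) (v : Fin n → X),
      ‖F (∑ i, v i) - ∑ i, F (v i)‖ ≤ Q * (2 * n) * ∑ i, ‖v i‖ := by
  intro n
  induction n with
  | zero => intro v; simp [hF.map_zero]
  | succ n ih =>
    intro v
    set w : Fin n → X := fun i => v i.castSucc with hw
    have hsum : (∑ i, v i) = (∑ i, w i) + v (Fin.last n) := by
      rw [Fin.sum_univ_castSucc]
    have hsumF : (∑ i, F (v i)) = (∑ i, F (w i)) + F (v (Fin.last n)) := by
      rw [Fin.sum_univ_castSucc]
    have hsumn : (∑ i, ‖v i‖) = (∑ i, ‖w i‖) + ‖v (Fin.last n)‖ := by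
      rw [Fin.sum_univ_castSucc]
    have h1 : ‖F ((∑ i, w i) + v (Fin.last n)) - F (∑ i, w i) - F (v (Fin.last n))‖
        ≤ Q * (‖∑ i, w i‖ + ‖v (Fin.last n)‖) := hF.2 _ _
    have h2 := ih w
    have hS : ‖∑ i, w i‖ ≤ ∑ i, ‖w i‖ := norm_sum_le _ _
    have key : ‖F (∑ i, v i) - ∑ i, F (v i)‖
        ≤ ‖F ((∑ i, w i) + v (Fin.last n)) - F (∑ i, w i) - F (v (Fin.last n))‖
          + ‖F (∑ i, w i) - ∑ i, F (w i)‖ := by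
      rw [hsum, hsumF]
      have : F ((∑ i, w i) + v (Fin.last n)) - ((∑ i, F (w i)) + F (v (Fin.last n)))
          = (F ((∑ i, w i) + v (Fin.last n)) - F (∑ i, w i) - F (v (Fin.last n)))
            + (F (∑ i, w i) - ∑ i, F (w i)) := by abel
      rw [this]
      exact norm_add_le _ _
    have hW : (0:ℝ) ≤ ∑ i, ‖w i‖ := Finset.sum_nonneg fun i _ => norm_nonneg _
    have hl : (0:ℝ) ≤ ‖v (Fin.last n)‖ := norm_nonneg _
    rw [hsumn]
    have hQS : Q * (‖∑ i, w i‖ + ‖v (Fin.last n)‖)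
        ≤ Q * ((∑ i, ‖w i‖) + ‖v (Fin.last n)‖) := by
      apply mul_le_mul_of_nonneg_left _ hQ
      linarith
    have := key.trans (add_le_add (h1.trans hQS) h2)
    push_cast
    push_cast at this
    nlinarith [this, hW, hl, hQ, mul_nonneg hQ hW, mul_nonneg hQ hl,
      mul_nonneg (mul_nonneg hQ hl) (Nat.cast_nonneg n : (0:ℝ) ≤ (n:ℝ))]

lemma quasi_bounded_on_findim {Q : ℝ} {F : X → Y} (hQ : 0 ≤ Q)
    (hF : IsQuasilinearWith Q F) (V : Submodule ℝ X) (hV : FiniteDimensional ℝ V) :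
    ∃ M : ℝ, ∀ w ∈ V, ‖F w‖ ≤ M * ‖w‖ := by
  classical
  set n := Module.finrank ℝ V with hn
  let b : Module.Basis (Fin n) ℝ V := Module.finBasis ℝ V
  let φ : Fin n → (V →L[ℝ] ℝ) := fun i => LinearMap.toContinuousLinearMap (b.coord i)
  refine ⟨∑ i, ‖φ i‖ * (Q * (2 * n) * ‖(b i : X)‖ + ‖F (b i : X)‖), fun w hw => ?_⟩
  set wv : V := ⟨w, hw⟩ with hwv
  set c : Fin n → ℝ := fun i => b.repr wv i with hc
  have hrep : (∑ i, c i • (b i : X)) = w := by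
    have := congrArg (Subtype.val : V → X) (b.sum_repr wv)
    simp only [Submodule.coe_sum, Submodule.coe_smul] at this
    exact this
  set v : Fin n → X := fun i => c i • (b i : X) with hv
  have h1 : ‖F (∑ i, v i) - ∑ i, F (v i)‖ ≤ Q * (2 * n) * ∑ i, ‖v i‖ :=
    quasi_sum hQ hF n v
  have hFv : ∀ i, F (v i) = c i • F (b i : X) := fun i => hF.1 _ _
  have hnv : ∀ i, ‖v i‖ = |c i| * ‖(b i : X)‖ := by
    intro i; simp [hv, norm_smul, Real.norm_eq_abs]
  have hci : ∀ i, |c i| ≤ ‖φ i‖ * ‖w‖ := by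
    intro i
    have := (φ i).le_opNorm wv
    have hwnorm : ‖wv‖ = ‖w‖ := rfl
    have hφ : φ i wv = c i := rfl
    rw [hφ, hwnorm] at this
    simpa [Real.norm_eq_abs] using this
  have hFw : F w = F (∑ i, v i) := by rw [hrep]
  have htri : ‖F w‖ ≤ ‖F (∑ i, v i) - ∑ i, F (v i)‖ + ∑ i, ‖F (v i)‖ := by
    rw [hFw]
    calc ‖F (∑ i, v i)‖
        ≤ ‖F (∑ i, v i) - ∑ i, F (v i)‖ + ‖∑ i, F (v i)‖ := by
          have := norm_add_le (F (∑ i, v i) - ∑ i, F (v i)) (∑ i, F (v i))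
          simpa using this
      _ ≤ ‖F (∑ i, v i) - ∑ i, F (v i)‖ + ∑ i, ‖F (v i)‖ :=
          add_le_add_right (norm_sum_le _ _) _
  have hbound : ‖F w‖ ≤ ∑ i, |c i| * (Q * (2 * n) * ‖(b i : X)‖ + ‖F (b i : X)‖) := by
    have h2 : Q * (2 * n) * ∑ i, ‖v i‖ = ∑ i, |c i| * (Q * (2 * n) * ‖(b i : X)‖) := by
      rw [Finset.mul_sum]
      refine Finset.sum_congr rfl fun i _ => ?_
      rw [hnv i]; ring
    have h3 : (∑ i, ‖F (v i)‖) = ∑ i, |c i| * ‖F (b i : X)‖ := by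
      refine Finset.sum_congr rfl fun i _ => ?_
      rw [hFv i, norm_smul, Real.norm_eq_abs]
    calc ‖F w‖ ≤ ‖F (∑ i, v i) - ∑ i, F (v i)‖ + ∑ i, ‖F (v i)‖ := htri
      _ ≤ Q * (2 * n) * (∑ i, ‖v i‖) + ∑ i, ‖F (v i)‖ := add_le_add_left h1 _
      _ = ∑ i, (|c i| * (Q * (2 * n) * ‖(b i : X)‖) + |c i| * ‖F (b i : X)‖) := by
          rw [h2, h3, ← Finset.sum_add_distrib]
      _ = ∑ i, |c i| * (Q * (2 * n) * ‖(b i : X)‖ + ‖F (b i : X)‖) := by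
          refine Finset.sum_congr rfl fun i _ => ?_; ring
  refine hbound.trans ?_
  rw [Finset.sum_mul]
  refine Finset.sum_le_sum fun i _ => ?_
  have hcoef : (0:ℝ) ≤ Q * (2 * n) * ‖(b i : X)‖ + ‖F (b i : X)‖ := by
    have : (0:ℝ) ≤ Q * (2 * n) := by positivity
    positivity
  calc |c i| * (Q * (2 * n) * ‖(b i : X)‖ + ‖F (b i : X)‖)
      ≤ (‖φ i‖ * ‖w‖) * (Q * (2 * n) * ‖(b i : X)‖ + ‖F (b i : X)‖) :=
        mul_le_mul_of_nonneg_right (hci i) hcoef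
    _ = ‖φ i‖ * (Q * (2 * n) * ‖(b i : X)‖ + ‖F (b i : X)‖) * ‖w‖ := by ring

end Aux

set_option maxHeartbeats 1000000 in
/-- if `X` has the `λ`-BAP, `Y` is complemented in its bidual by a
projection `p`, and every bounded quasilinear map `X → Y` with constant 1 is at distance
at most `C` from a linear map, then every quasilinear map `F : X → Y` with constant 1 is
at distance at most `‖p‖·C·λ` from a linear map; in particular `K(X,Y)` is finite. -/
theorem K_finite_of_K0_finite_of_BAP {X Y : Type*} [NormedAddCommGroup X]
    [NormedSpace ℝ X] [CompleteSpace X] [NormedAddCommGroup Y] [NormedSpace ℝ Y]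
    [CompleteSpace Y] (lam : ℝ) (hBAP : HasBAPWith lam X)
    (p : StrongDual ℝ (StrongDual ℝ Y) →L[ℝ] Y)
    (hp : ∀ y : Y, p (NormedSpace.inclusionInDoubleDual ℝ Y y) = y)
    (C : ℝ) (hC : 0 ≤ C)
    (h0 : ∀ G : X → Y, IsQuasilinearWith 1 G → (∃ M : ℝ, ∀ x : X, ‖G x‖ ≤ M * ‖x‖) →
      ∃ L : X →ₗ[ℝ] Y, ∀ x : X, ‖G x - L x‖ ≤ C * ‖x‖)
    (F : X → Y) (hF : IsQuasilinearWith 1 F) :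
    ∃ L : X →ₗ[ℝ] Y, ∀ x : X, ‖F x - L x‖ ≤ @Norm.norm _ (ContinuousLinearMap.hasOpNorm (𝕜 := ℝ) (𝕜₂ := ℝ)
      (E := StrongDual ℝ (StrongDual ℝ Y)) (F := Y) (σ₁₂ := RingHom.id ℝ)) p * C * lam * ‖x‖ := by
  classical
  -- trivial case: X has only 0
  by_cases hX : ∀ x : X, x = 0
  · refine ⟨0, fun x => ?_⟩
    rw [hX x]
    simp [hF.map_zero]
  push_neg at hX
  obtain ⟨x₀, hx₀⟩ := hX
  -- lam ≥ 1
  have hlam1 : (1:ℝ) ≤ lam := by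
    obtain ⟨u, _, hu_norm, hu_fix⟩ :=
      hBAP (Submodule.span ℝ {x₀}) inferInstance
    have hx : u x₀ = x₀ := hu_fix x₀ (Submodule.mem_span_singleton_self x₀)
    have h1 : ‖x₀‖ ≤ ‖u‖ * ‖x₀‖ := by
      conv_lhs => rw [← hx]
      exact u.le_opNorm x₀
    have hx₀pos : 0 < ‖x₀‖ := norm_pos_iff.mpr hx₀
    have : (1:ℝ) ≤ ‖u‖ := by
      by_contra h
      push_neg at h
      nlinarith
    linarith [this.trans hu_norm]
  have hlam0 : (0:ℝ) < lam := lt_of_lt_of_le one_pos hlam1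
  -- the family of linear maps indexed by finite-dimensional subspaces
  have key : ∀ E : Submodule ℝ X, FiniteDimensional ℝ E →
      ∃ L : X →ₗ[ℝ] Y, ∀ x ∈ E, ‖F x - L x‖ ≤ C * lam * ‖x‖ := by
    intro E hE
    obtain ⟨u, hu_fin, hu_norm, hu_fix⟩ := hBAP E hE
    set G : X → Y := fun x => lam⁻¹ • F (u x) with hG
    have hGq : IsQuasilinearWith 1 G := by
      constructor
      · intro c x
        rw [hG]
        simp only
        rw [map_smul, hF.1 c (u x), smul_comm]
      · intro x y
        have h1 : ‖F (u x + u y) - F (u x) - F (u y)‖ ≤ 1 * (‖u x‖ + ‖u y‖) := hF.2 _ _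
        have h2 : ‖u x‖ ≤ lam * ‖x‖ := by
          calc ‖u x‖ ≤ ‖u‖ * ‖x‖ := u.le_opNorm x
            _ ≤ lam * ‖x‖ := mul_le_mul_of_nonneg_right hu_norm (norm_nonneg x)
        have h3 : ‖u y‖ ≤ lam * ‖y‖ := by
          calc ‖u y‖ ≤ ‖u‖ * ‖y‖ := u.le_opNorm y
            _ ≤ lam * ‖y‖ := mul_le_mul_of_nonneg_right hu_norm (norm_nonneg y)
        have : G (x + y) - G x - G y = lam⁻¹ • (F (u x + u y) - F (u x) - F (u y)) := by
          rw [hG]; simp only [map_add]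
          rw [smul_sub, smul_sub]
        rw [this, norm_smul, Real.norm_eq_abs, abs_of_pos (inv_pos.mpr hlam0)]
        calc lam⁻¹ * ‖F (u x + u y) - F (u x) - F (u y)‖
            ≤ lam⁻¹ * (lam * ‖x‖ + lam * ‖y‖) := by
              apply mul_le_mul_of_nonneg_left _ (le_of_lt (inv_pos.mpr hlam0))
              calc ‖F (u x + u y) - F (u x) - F (u y)‖ ≤ 1 * (‖u x‖ + ‖u y‖) := h1
                _ = ‖u x‖ + ‖u y‖ := one_mul _
                _ ≤ lam * ‖x‖ + lam * ‖y‖ := add_le_add h2 h3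
          _ = 1 * (‖x‖ + ‖y‖) := by field_simp
    have hGb : ∃ M : ℝ, ∀ x : X, ‖G x‖ ≤ M * ‖x‖ := by
      obtain ⟨M, hM⟩ := quasi_bounded_on_findim zero_le_one hF
        (LinearMap.range (u : X →ₗ[ℝ] X)) hu_fin
      refine ⟨lam⁻¹ * |M| * lam, fun x => ?_⟩
      have hmem : u x ∈ LinearMap.range (u : X →ₗ[ℝ] X) := ⟨x, rfl⟩
      have h1 : ‖F (u x)‖ ≤ M * ‖u x‖ := hM (u x) hmem
      have h2 : ‖u x‖ ≤ lam * ‖x‖ := by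
        calc ‖u x‖ ≤ ‖u‖ * ‖x‖ := u.le_opNorm x
          _ ≤ lam * ‖x‖ := mul_le_mul_of_nonneg_right hu_norm (norm_nonneg x)
      have h3 : M * ‖u x‖ ≤ |M| * (lam * ‖x‖) := by
        calc M * ‖u x‖ ≤ |M| * ‖u x‖ :=
              mul_le_mul_of_nonneg_right (le_abs_self M) (norm_nonneg _)
          _ ≤ |M| * (lam * ‖x‖) := mul_le_mul_of_nonneg_left h2 (abs_nonneg M)
      rw [hG]
      simp only
      rw [norm_smul, Real.norm_eq_abs, abs_of_pos (inv_pos.mpr hlam0)]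
      calc lam⁻¹ * ‖F (u x)‖ ≤ lam⁻¹ * (|M| * (lam * ‖x‖)) := by
            apply mul_le_mul_of_nonneg_left _ (le_of_lt (inv_pos.mpr hlam0))
            exact h1.trans h3
        _ = lam⁻¹ * |M| * lam * ‖x‖ := by ring
    obtain ⟨L', hL'⟩ := h0 G hGq hGb
    refine ⟨lam • L', fun x hx => ?_⟩
    have hux : u x = x := hu_fix x hx
    have : F x - (lam • L') x = lam • (G x - L' x) := by
      simp only [LinearMap.smul_apply, hG, smul_sub, smul_smul,
        mul_inv_cancel₀ (ne_of_gt hlam0), one_smul, hux]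
    rw [this, norm_smul, Real.norm_eq_abs, abs_of_pos hlam0]
    calc lam * ‖G x - L' x‖ ≤ lam * (C * ‖x‖) :=
          mul_le_mul_of_nonneg_left (hL' x) (le_of_lt hlam0)
      _ = C * lam * ‖x‖ := by ring
  -- set up the directed set of finite-dimensional subspaces and an ultrafilter
  let D := {E : Submodule ℝ X // FiniteDimensional ℝ E}
  let Lf : D → (X →ₗ[ℝ] Y) := fun E => (key E.1 E.2).choose
  have hLf : ∀ (E : D), ∀ x ∈ E.1, ‖F x - Lf E x‖ ≤ C * lam * ‖x‖ :=
    fun E => (key E.1 E.2).choose_spec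
  haveI : Nonempty D := ⟨⟨⊥, inferInstance⟩⟩
  haveI : IsDirected D (· ≤ ·) := ⟨fun a b =>
    ⟨⟨a.1 ⊔ b.1, @Submodule.finiteDimensional_sup ℝ X _ _ _ a.1 b.1 a.2 b.2⟩,
      (le_sup_left : a.1 ≤ a.1 ⊔ b.1), (le_sup_right : b.1 ≤ a.1 ⊔ b.1)⟩⟩
  haveI : (Filter.atTop : Filter D).NeBot := Filter.atTop_neBot
  let 𝒰 : Ultrafilter D := Ultrafilter.of Filter.atTop
  have h𝒰 : (𝒰 : Filter D) ≤ Filter.atTop := Ultrafilter.of_le _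
  -- for each x, eventually x ∈ E
  have hev : ∀ x : X, ∀ᶠ E in (𝒰 : Filter D), x ∈ E.1 := by
    intro x
    apply h𝒰
    have : ∀ᶠ E in (Filter.atTop : Filter D),
        (⟨Submodule.span ℝ {x}, inferInstance⟩ : D) ≤ E :=
      Filter.eventually_ge_atTop _
    filter_upwards [this] with E hE
    exact hE (Submodule.mem_span_singleton_self x)
  -- eventual bound on ‖Lf E x‖
  have hevb : ∀ x : X, ∀ᶠ E in (𝒰 : Filter D),
      ‖Lf E x‖ ≤ ‖F x‖ + C * lam * ‖x‖ := by
    intro x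
    filter_upwards [hev x] with E hE
    have h1 := hLf E x hE
    calc ‖Lf E x‖ = ‖F x - (F x - Lf E x)‖ := by rw [sub_sub_cancel]
      _ ≤ ‖F x‖ + ‖F x - Lf E x‖ := norm_sub_le _ _
      _ ≤ ‖F x‖ + C * lam * ‖x‖ := add_le_add_right h1 _
  -- existence of ultrafilter limits
  have limex : ∀ (x : X) (f : StrongDual ℝ Y),
      ∃ r : ℝ, Filter.Tendsto (fun E => f (Lf E x)) (𝒰 : Filter D) (nhds r) := by
    intro x f
    set B := ‖f‖ * (‖F x‖ + C * lam * ‖x‖) with hB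
    have hcomp : IsCompact (Set.Icc (-B) B) := isCompact_Icc
    have hmem : ∀ᶠ E in (𝒰 : Filter D), f (Lf E x) ∈ Set.Icc (-B) B := by
      filter_upwards [hevb x] with E hE
      have h1 : ‖f (Lf E x)‖ ≤ ‖f‖ * ‖Lf E x‖ := f.le_opNorm _
      have h2 : ‖f‖ * ‖Lf E x‖ ≤ B := by
        rw [hB]
        exact mul_le_mul_of_nonneg_left hE (norm_nonneg f)
      have := h1.trans h2
      rw [Real.norm_eq_abs, abs_le] at this
      exact ⟨this.1, this.2⟩
    have hle : ↑(𝒰.map (fun E => f (Lf E x))) ≤ Filter.principal (Set.Icc (-B) B) := by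
      rw [Filter.le_principal_iff]
      exact hmem
    obtain ⟨r, _, hr⟩ := hcomp.ultrafilter_le_nhds _ hle
    exact ⟨r, hr⟩
  let lm : X → StrongDual ℝ Y → ℝ := fun x f => (limex x f).choose
  have hlm : ∀ x f, Filter.Tendsto (fun E => f (Lf E x)) (𝒰 : Filter D) (nhds (lm x f)) :=
    fun x f => (limex x f).choose_spec
  haveI : (𝒰 : Filter D).NeBot := Ultrafilter.neBot 𝒰
  have huniq : ∀ (x : X) (f : StrongDual ℝ Y) (r : ℝ),
      Filter.Tendsto (fun E => f (Lf E x)) (𝒰 : Filter D) (nhds r) → lm x f = r :=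
    fun x f r hr => tendsto_nhds_unique (hlm x f) hr
  -- Λ x : Y**
  have hΛbound : ∀ (x : X) (f : StrongDual ℝ Y),
      |lm x f| ≤ (‖F x‖ + C * lam * ‖x‖) * ‖f‖ := by
    intro x f
    have htendabs : Filter.Tendsto (fun E => |f (Lf E x)|) (𝒰 : Filter D)
        (nhds (|lm x f|)) := (continuous_abs.tendsto _).comp (hlm x f)
    apply le_of_tendsto htendabs
    filter_upwards [hevb x] with E hE
    have h1 : ‖f (Lf E x)‖ ≤ ‖f‖ * ‖Lf E x‖ := f.le_opNorm _
    rw [Real.norm_eq_abs] at h1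
    calc |f (Lf E x)| ≤ ‖f‖ * ‖Lf E x‖ := h1
      _ ≤ ‖f‖ * (‖F x‖ + C * lam * ‖x‖) :=
          mul_le_mul_of_nonneg_left hE (norm_nonneg f)
      _ = (‖F x‖ + C * lam * ‖x‖) * ‖f‖ := mul_comm _ _
  let Λlin : X → (StrongDual ℝ Y →ₗ[ℝ] ℝ) := fun x =>
    { toFun := lm x
      map_add' := fun f g => by
        apply huniq
        have : (fun E => (f + g) (Lf E x)) =
            fun E => f (Lf E x) + g (Lf E x) := by
          funext E; simp
        rw [this]
        exact (hlm x f).add (hlm x g)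
      map_smul' := fun c f => by
        simp only [RingHom.id_apply, smul_eq_mul]
        apply huniq
        have : (fun E => (c • f) (Lf E x)) = fun E => c * f (Lf E x) := by
          funext E; simp
        rw [this]
        exact (hlm x f).const_mul c }
  let Λ : X → StrongDual ℝ (StrongDual ℝ Y) := fun x =>
    LinearMap.mkContinuous (Λlin x) (‖F x‖ + C * lam * ‖x‖) (fun f => by
      rw [Real.norm_eq_abs]; exact hΛbound x f)
  have hΛapp : ∀ x f, Λ x f = lm x f := fun x f => rfl
  -- L
  have hΛadd : ∀ x y : X, Λ (x + y) = Λ x + Λ y := by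
    intro x y
    ext f
    simp only [ContinuousLinearMap.add_apply, hΛapp]
    apply huniq
    have : (fun E => f (Lf E (x + y))) =
        fun E => f (Lf E x) + f (Lf E y) := by
      funext E; rw [map_add, map_add]
    rw [this]
    exact (hlm x f).add (hlm y f)
  have hΛsmul : ∀ (c : ℝ) (x : X), Λ (c • x) = c • Λ x := by
    intro c x
    ext f
    simp only [ContinuousLinearMap.smul_apply, hΛapp, smul_eq_mul]
    apply huniq
    have : (fun E => f (Lf E (c • x))) = fun E => c * f (Lf E x) := by
      funext E; rw [map_smul, map_smul]; simp
    rw [this]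
    exact (hlm x f).const_mul c
  refine ⟨{ toFun := fun x => p (Λ x)
            map_add' := fun x y => by
              show p (Λ (x + y)) = p (Λ x) + p (Λ y)
              rw [hΛadd, map_add]
            map_smul' := fun c x => by
              show p (Λ (c • x)) = c • p (Λ x)
              rw [hΛsmul, map_smul] }, fun x => ?_⟩
  simp only [LinearMap.coe_mk, AddHom.coe_mk]
  have hdiff : ‖NormedSpace.inclusionInDoubleDual ℝ Y (F x) - Λ x‖ ≤ C * lam * ‖x‖ := by
    apply ContinuousLinearMap.opNorm_le_bound _ (by positivity)
    intro f
    simp only [ContinuousLinearMap.sub_apply, hΛapp, NormedSpace.dual_def]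
    have htend : Filter.Tendsto (fun E => f (F x) - f (Lf E x)) (𝒰 : Filter D)
        (nhds (f (F x) - lm x f)) := tendsto_const_nhds.sub (hlm x f)
    have htendabs : Filter.Tendsto (fun E => |f (F x) - f (Lf E x)|) (𝒰 : Filter D)
        (nhds (|f (F x) - lm x f|)) := (continuous_abs.tendsto _).comp htend
    rw [Real.norm_eq_abs]
    apply le_of_tendsto htendabs
    filter_upwards [hev x] with E hE
    have h1 := hLf E x hE
    have h2 : f (F x) - f (Lf E x) = f (F x - Lf E x) := by rw [map_sub]
    rw [h2]
    calc |f (F x - Lf E x)| ≤ ‖f‖ * ‖F x - Lf E x‖ := by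
          have := f.le_opNorm (F x - Lf E x)
          rwa [Real.norm_eq_abs] at this
      _ ≤ ‖f‖ * (C * lam * ‖x‖) :=
          mul_le_mul_of_nonneg_left h1 (norm_nonneg f)
      _ = C * lam * ‖x‖ * ‖f‖ := mul_comm _ _
  have hFp : F x = p (NormedSpace.inclusionInDoubleDual ℝ Y (F x)) := (hp (F x)).symm
  calc ‖F x - p (Λ x)‖
      = ‖p (NormedSpace.inclusionInDoubleDual ℝ Y (F x) - Λ x)‖ := by
        rw [map_sub p, ← hFp]
    _ ≤ @Norm.norm _ (ContinuousLinearMap.hasOpNorm (𝕜 := ℝ) (𝕜₂ := ℝ)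
        (E := StrongDual ℝ (StrongDual ℝ Y)) (F := Y) (σ₁₂ := RingHom.id ℝ)) p * ‖NormedSpace.inclusionInDoubleDual ℝ Y (F x) - Λ x‖ :=
        ContinuousLinearMap.le_opNorm (E := StrongDual ℝ (StrongDual ℝ Y)) (F := Y) (σ₁₂ := RingHom.id ℝ) (𝕜 := ℝ) (𝕜₂ := ℝ) p _
    _ ≤ @Norm.norm _ (ContinuousLinearMap.hasOpNorm (𝕜 := ℝ) (𝕜₂ := ℝ)
        (E := StrongDual ℝ (StrongDual ℝ Y)) (F := Y) (σ₁₂ := RingHom.id ℝ)) p * (C * lam * ‖x‖) :=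
        mul_le_mul_of_nonneg_left hdiff (ContinuousLinearMap.opNorm_nonneg (E := StrongDual ℝ (StrongDual ℝ Y)) (F := Y) (σ₁₂ := RingHom.id ℝ) (𝕜 := ℝ) (𝕜₂ := ℝ) p)
    _ = @Norm.norm _ (ContinuousLinearMap.hasOpNorm (𝕜 := ℝ) (𝕜₂ := ℝ)
        (E := StrongDual ℝ (StrongDual ℝ Y)) (F := Y) (σ₁₂ := RingHom.id ℝ)) p * C * lam * ‖x‖ := by ring
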